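/- (Penrose, consistency criterion) Let A be an m × n complex matrix, B a p × q complex matrix and C an m × q complex matrix. The matrix equation A X B = C has a solution X (an n × p complex matrix) if and only if there exist a {1}-inverse A⁽¹⁾ of A and a {1}-inverse B⁽¹⁾ of B such that A A⁽¹⁾ C B⁽¹⁾ B = C. -/

import Mathlib

open Matrix

lemma exists_one_inverse {m n : ℕ} (A : Matrix (Fin m) (Fin n) ℂ) :
    ∃ A1 : Matrix (Fin n) (Fin m) ℂ, A * A1 * A = A := by
  set f := Matrix.toLin' A with hf
  obtain ⟨h, hh⟩ := f.rangeRestrict.exists_rightInverse_of_surjective f.range_rangeRestrict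
  obtain ⟨π, hπ⟩ :=
    (LinearMap.range f).subtype.exists_leftInverse_of_injective (LinearMap.range f).ker_subtype
  refine ⟨LinearMap.toMatrix' (h ∘ₗ π), ?_⟩
  have key : f ∘ₗ (h ∘ₗ π) ∘ₗ f = f := by
    refine LinearMap.ext fun x => ?_
    have h1 : π (f x) = f.rangeRestrict x := by
      have := congrFun (congrArg DFunLike.coe hπ) (f.rangeRestrict x)
      simpa using this
    have h2 : f.rangeRestrict (h (f.rangeRestrict x)) = f.rangeRestrict x := by
      have := congrFun (congrArg DFunLike.coe hh) (f.rangeRestrict x)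
      simpa only [LinearMap.comp_apply, LinearMap.id_apply] using this
    simp only [LinearMap.comp_apply, h1]
    exact congrArg Subtype.val h2
  have := congrArg LinearMap.toMatrix' key
  simpa [hf, LinearMap.toMatrix'_comp, Matrix.mul_assoc] using this

/-- Penrose: the matrix equation `A X B = C` is consistent iff for some choice of
`{1}`-inverses `A⁽¹⁾`, `B⁽¹⁾` one has `A A⁽¹⁾ C B⁽¹⁾ B = C`. -/
theorem penrose_consistency {m n p q : ℕ}
    (A : Matrix (Fin m) (Fin n) ℂ) (B : Matrix (Fin p) (Fin q) ℂ)
    (C : Matrix (Fin m) (Fin q) ℂ) :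
    (∃ X : Matrix (Fin n) (Fin p) ℂ, A * X * B = C) ↔
      ∃ (A1 : Matrix (Fin n) (Fin m) ℂ) (B1 : Matrix (Fin q) (Fin p) ℂ),
        A * A1 * A = A ∧ B * B1 * B = B ∧ A * A1 * C * B1 * B = C := by
  constructor
  · rintro ⟨X, rfl⟩
    obtain ⟨A1, hA⟩ := exists_one_inverse A
    obtain ⟨B1, hB⟩ := exists_one_inverse B
    refine ⟨A1, B1, hA, hB, ?_⟩
    calc A * A1 * (A * X * B) * B1 * B
        = (A * A1 * A) * X * (B * B1 * B) := by simp only [Matrix.mul_assoc]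
      _ = A * X * B := by rw [hA, hB]
  · rintro ⟨A1, B1, hA, hB, hC⟩
    refine ⟨A1 * C * B1, ?_⟩
    calc A * (A1 * C * B1) * B = A * A1 * C * B1 * B := by simp only [Matrix.mul_assoc]
      _ = C := hC
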